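/- For simplicial complexes Δ₁ and Δ₂ on disjoint vertex sets, the join Δ₁ * Δ₂ is k-decomposable if and only if both Δ₁ and Δ₂ are k-decomposable. -/

import Mathlib

variable {ι : Type*} [DecidableEq ι]

/-- A clutter: an antichain of finite sets (no circuit properly contains another). -/
def IsClutter (C : Set (Finset ι)) : Prop :=
  ∀ e₁ ∈ C, ∀ e₂ ∈ C, e₁ ⊆ e₂ → e₁ = e₂

/-- The independence complex of the clutter with circuit set `C` on ground set `V`:
faces are the subsets of `V` containing no circuit. -/
def indepOn (V : Finset ι) (C : Set (Finset ι)) : Set (Finset ι) :=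
  {σ | σ ⊆ V ∧ ∀ e ∈ C, ¬ e ⊆ σ}

/-- The minimal members of a family of finite sets. -/
def minimalSets (S : Set (Finset ι)) : Set (Finset ι) :=
  {e | e ∈ S ∧ ∀ f ∈ S, f ⊆ e → f = e}

/-- Deletion of a vertex from a clutter: keep the circuits avoiding `v`. -/
def clDel (C : Set (Finset ι)) (v : ι) : Set (Finset ι) :=
  {e | e ∈ C ∧ v ∉ e}

/-- Contraction of a vertex in a clutter: minimal sets among `{e \ {v}}`. -/
def clCon (C : Set (Finset ι)) (v : ι) : Set (Finset ι) :=
  minimalSets ((fun e => e.erase v) '' C)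

/-- A simplicial complex: a family of finite sets closed under taking subsets. -/
def IsComplex (Δ : Set (Finset ι)) : Prop :=
  ∀ σ ∈ Δ, ∀ τ, τ ⊆ σ → τ ∈ Δ

/-- The link of a face `σ`. -/
def link (Δ : Set (Finset ι)) (σ : Finset ι) : Set (Finset ι) :=
  {τ | Disjoint τ σ ∧ τ ∪ σ ∈ Δ}

/-- The face-deletion `Δ \ σ`: faces of `Δ` not containing `σ`. -/
def delFace (Δ : Set (Finset ι)) (σ : Finset ι) : Set (Finset ι) :=
  {τ | τ ∈ Δ ∧ ¬ σ ⊆ τ}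

/-- The star of a face `σ`, as a subcomplex. -/
def starC (Δ : Set (Finset ι)) (σ : Finset ι) : Set (Finset ι) :=
  {τ | τ ∈ Δ ∧ τ ∪ σ ∈ Δ}

/-- A facet: a maximal face. -/
def IsFacet (Δ : Set (Finset ι)) (σ : Finset ι) : Prop :=
  σ ∈ Δ ∧ ∀ τ ∈ Δ, σ ⊆ τ → σ = τ

/-- A shedding face: every face `τ` of the star of `σ` satisfies the exchange property:
for every `v ∈ σ` there is `w ∉ τ` with `(τ ∪ {w}) \ {v}` a face. -/
def SheddingFace (Δ : Set (Finset ι)) (σ : Finset ι) : Prop :=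
  ∀ τ ∈ Δ, σ ⊆ τ → ∀ v ∈ σ, ∃ w, w ∉ τ ∧ (insert w τ).erase v ∈ Δ

/-- Shellability (Björner–Wachs form): an ordering `f 0, f 1, …` of the facets such
that for all `i < j` there are `k < j` and `x ∈ f j` with
`f i ∩ f j ⊆ f k ∩ f j = f j \ {x}`. -/
def Shellable (Δ : Set (Finset ι)) : Prop :=
  ∃ (m : ℕ) (f : Fin m → Finset ι),
    Function.Injective f ∧
    (∀ σ, IsFacet Δ σ ↔ ∃ i, f i = σ) ∧
    ∀ i j : Fin m, i < j →
      ∃ k, k < j ∧ ∃ x ∈ f j, f i ∩ f j ⊆ f k ∩ f j ∧ f k ∩ f j = (f j).erase x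

/-- `k`-decomposability (for possibly non-pure complexes): a complex is
`k`-decomposable if it is a simplex (or degenerate), or has a shedding face of
dimension at most `k` whose deletion and link are both `k`-decomposable. -/
inductive KDecomposable : ℤ → Set (Finset ι) → Prop
  | of_empty (k : ℤ) : KDecomposable k ∅
  | of_simplex (k : ℤ) (σ : Finset ι) : KDecomposable k {τ | τ ⊆ σ}
  | of_shed (k : ℤ) (Δ : Set (Finset ι)) (σ : Finset ι) (hσ : σ ∈ Δ)
      (hne : σ.Nonempty) (hdim : (σ.card : ℤ) ≤ k + 1)
      (hshed : SheddingFace Δ σ)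
      (h₁ : KDecomposable k (delFace Δ σ)) (h₂ : KDecomposable k (link Δ σ)) :
      KDecomposable k Δ

/-- A simplicial vertex of a clutter: any two distinct circuits `e₁, e₂` containing `v`
admit a third circuit `e₃ ⊆ (e₁ ∪ e₂) \ {v}`. -/
def SimplicialVertex (C : Set (Finset ι)) (v : ι) : Prop :=
  ∀ e₁ ∈ C, ∀ e₂ ∈ C, e₁ ≠ e₂ → v ∈ e₁ → v ∈ e₂ →
    ∃ e₃ ∈ C, e₃ ⊆ (e₁ ∪ e₂).erase v

/-- Minors of a clutter (with ground set): obtained by repeated deletions and contractions. -/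
inductive Minor : Finset ι → Set (Finset ι) → Finset ι → Set (Finset ι) → Prop
  | refl (V : Finset ι) (C : Set (Finset ι)) : Minor V C V C
  | del {V C W D} (v : ι) (hv : v ∈ W) (h : Minor V C W D) :
      Minor V C (W.erase v) (clDel D v)
  | con {V C W D} (v : ι) (hv : v ∈ W) (h : Minor V C W D) :
      Minor V C (W.erase v) (clCon D v)

/-- Contractions of a clutter (with ground set): obtained by repeated contractions. -/
inductive ConMinor : Finset ι → Set (Finset ι) → Finset ι → Set (Finset ι) → Prop
  | refl (V : Finset ι) (C : Set (Finset ι)) : ConMinor V C V C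
  | con {V C W D} (v : ι) (hv : v ∈ W) (h : ConMinor V C W D) :
      ConMinor V C (W.erase v) (clCon D v)

/-- A clutter is chordal if every minor with at least one vertex has a simplicial vertex. -/
def Chordal (V : Finset ι) (C : Set (Finset ι)) : Prop :=
  ∀ W D, Minor V C W D → W.Nonempty → ∃ v ∈ W, SimplicialVertex D v

/-- Clutter of minimal non-faces of a complex `Δ` on ground set `V`. -/
def nonfaceClutter (V : Finset ι) (Δ : Set (Finset ι)) : Set (Finset ι) :=
  {e | e ⊆ V ∧ e ∉ Δ ∧ ∀ e', e' ⊂ e → e' ∈ Δ}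

/-- `cNon V C d`: the `d`-non-circuits of `C`, i.e. the `d`-subsets of `V`
that are not circuits of `C`. -/
def cNon (V : Finset ι) (C : Set (Finset ι)) (d : ℕ) : Set (Finset ι) :=
  {e | e ⊆ V ∧ e.card = d ∧ e ∉ C}

/-- Combinatorial Alexander dual of a complex on ground set `V`. -/
def alexDual (V : Finset ι) (Δ : Set (Finset ι)) : Set (Finset ι) :=
  {σ | σ ⊆ V ∧ V \ σ ∉ Δ}

/-- Join of two complexes. -/
def joinC (Δ₁ Δ₂ : Set (Finset ι)) : Set (Finset ι) :=
  {σ | ∃ σ₁ ∈ Δ₁, ∃ σ₂ ∈ Δ₂, σ = σ₁ ∪ σ₂}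

section JoinAux

lemma empty_mem_of_complex {Δ : Set (Finset ι)} (h : IsComplex Δ) (hne : Δ.Nonempty) :
    (∅ : Finset ι) ∈ Δ := by
  obtain ⟨σ, hσ⟩ := hne
  exact h σ hσ ∅ (Finset.empty_subset σ)

lemma joinC_comm (Δ₁ Δ₂ : Set (Finset ι)) : joinC Δ₁ Δ₂ = joinC Δ₂ Δ₁ := by
  ext τ
  constructor <;> rintro ⟨a, ha, b, hb, rfl⟩ <;> exact ⟨b, hb, a, ha, Finset.union_comm a b⟩

lemma joinC_empty_left (Δ : Set (Finset ι)) : joinC ∅ Δ = ∅ := by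
  ext τ; simp [joinC]

lemma joinC_empty_right (Δ : Set (Finset ι)) : joinC Δ ∅ = ∅ := by
  ext τ; simp [joinC]

lemma joinC_simplex (s t : Finset ι) :
    joinC {τ : Finset ι | τ ⊆ s} {τ : Finset ι | τ ⊆ t} = {τ : Finset ι | τ ⊆ s ∪ t} := by
  ext τ
  constructor
  · rintro ⟨a, ha, b, hb, rfl⟩
    exact Finset.union_subset (ha.trans Finset.subset_union_left)
      (hb.trans Finset.subset_union_right)
  · intro h
    refine ⟨τ ∩ s, Finset.inter_subset_right, τ \ s, ?_, by rw [Finset.union_comm]; exact (Finset.sdiff_union_inter τ s).symm⟩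
    intro x hx
    rcases Finset.mem_union.1 (h (Finset.mem_sdiff.1 hx).1) with h' | h'
    · exact absurd h' (Finset.mem_sdiff.1 hx).2
    · exact h'

lemma isComplex_joinC {Δ₁ Δ₂ : Set (Finset ι)} (h₁ : IsComplex Δ₁) (h₂ : IsComplex Δ₂) :
    IsComplex (joinC Δ₁ Δ₂) := by
  rintro σ ⟨a, ha, b, hb, rfl⟩ τ hτ
  refine ⟨τ ∩ a, h₁ a ha _ Finset.inter_subset_right,
    τ ∩ b, h₂ b hb _ Finset.inter_subset_right, ?_⟩
  rw [← Finset.inter_union_distrib_left, Finset.inter_eq_left.2 hτ]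

lemma isComplex_delFace {Δ : Set (Finset ι)} (h : IsComplex Δ) (σ : Finset ι) :
    IsComplex (delFace Δ σ) := by
  rintro τ ⟨hτ, hn⟩ ρ hρ
  exact ⟨h τ hτ ρ hρ, fun hs => hn (hs.trans hρ)⟩

lemma isComplex_link {Δ : Set (Finset ι)} (h : IsComplex Δ) (σ : Finset ι) :
    IsComplex (link Δ σ) := by
  rintro τ ⟨hd, hu⟩ ρ hρ
  exact ⟨hd.mono_left hρ, h _ hu _ (Finset.union_subset_union hρ (subset_refl σ))⟩

/-- If `σ ⊆ V₂`, `a ⊆ V₁` with `V₁, V₂` disjoint, and `σ ⊆ a ∪ b`, then `σ ⊆ b`. -/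
lemma subset_right_of_union {σ a b V₁ V₂ : Finset ι} (hs : σ ⊆ a ∪ b) (hσV : σ ⊆ V₂)
    (haV : a ⊆ V₁) (hd : Disjoint V₁ V₂) : σ ⊆ b := by
  intro x hx
  rcases Finset.mem_union.1 (hs hx) with h | h
  · exact absurd (hσV hx) (Finset.disjoint_left.1 hd (haV h))
  · exact h

lemma delFace_joinC {V₁ V₂ : Finset ι} {Δ₁ Δ₂ : Set (Finset ι)} {σ : Finset ι}
    (hV₁ : ∀ τ ∈ Δ₁, τ ⊆ V₁) (hσV : σ ⊆ V₂) (hd : Disjoint V₁ V₂) :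
    delFace (joinC Δ₁ Δ₂) σ = joinC Δ₁ (delFace Δ₂ σ) := by
  ext τ
  constructor
  · rintro ⟨⟨a, ha, b, hb, rfl⟩, hn⟩
    exact ⟨a, ha, b, ⟨hb, fun hs => hn (hs.trans Finset.subset_union_right)⟩, rfl⟩
  · rintro ⟨a, ha, b, ⟨hb, hnb⟩, rfl⟩
    exact ⟨⟨a, ha, b, hb, rfl⟩,
      fun hs => hnb (subset_right_of_union hs hσV (hV₁ a ha) hd)⟩

lemma link_joinC {V₁ V₂ : Finset ι} {Δ₁ Δ₂ : Set (Finset ι)} {σ : Finset ι}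
    (hV₁ : ∀ τ ∈ Δ₁, τ ⊆ V₁) (hV₂ : ∀ τ ∈ Δ₂, τ ⊆ V₂) (hσV : σ ⊆ V₂)
    (hd : Disjoint V₁ V₂) :
    link (joinC Δ₁ Δ₂) σ = joinC Δ₁ (link Δ₂ σ) := by
  ext τ
  constructor
  · rintro ⟨hdisj, a, ha, b, hb, heq⟩
    -- heq : τ ∪ σ = a ∪ b
    have haV : a ⊆ V₁ := hV₁ a ha
    have hbV : b ⊆ V₂ := hV₂ b hb
    have ha' : τ ∩ V₁ = a := by
      ext x
      simp only [Finset.mem_inter]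
      constructor
      · rintro ⟨hxτ, hxV⟩
        have : x ∈ a ∪ b := heq ▸ Finset.mem_union_left σ hxτ
        rcases Finset.mem_union.1 this with h | h
        · exact h
        · exact absurd hxV (Finset.disjoint_right.1 hd (hbV h))
      · intro hxa
        have : x ∈ τ ∪ σ := heq ▸ Finset.mem_union_left b hxa
        rcases Finset.mem_union.1 this with h | h
        · exact ⟨h, haV hxa⟩
        · exact absurd (hσV h) (Finset.disjoint_left.1 hd (haV hxa))
    have hb' : (τ \ V₁) ∪ σ = b := by
      ext x
      simp only [Finset.mem_union, Finset.mem_sdiff]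
      constructor
      · rintro (⟨hxτ, hxV⟩ | hxσ)
        · have : x ∈ a ∪ b := heq ▸ Finset.mem_union_left σ hxτ
          rcases Finset.mem_union.1 this with h | h
          · exact absurd (haV h) hxV
          · exact h
        · have : x ∈ a ∪ b := heq ▸ Finset.mem_union_right τ hxσ
          rcases Finset.mem_union.1 this with h | h
          · exact absurd (hσV hxσ) (Finset.disjoint_left.1 hd (haV h))
          · exact h
      · intro hxb
        have : x ∈ τ ∪ σ := heq ▸ Finset.mem_union_right a hxb
        rcases Finset.mem_union.1 this with h | h
        · exact Or.inl ⟨h, fun hv => Finset.disjoint_left.1 hd hv (hbV hxb)⟩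
        · exact Or.inr h
    refine ⟨τ ∩ V₁, ha' ▸ ha, τ \ V₁, ⟨?_, hb' ▸ hb⟩, by rw [Finset.union_comm]; exact (Finset.sdiff_union_inter τ V₁).symm⟩
    exact hdisj.mono_left Finset.sdiff_subset
  · rintro ⟨a, ha, b, ⟨hbd, hbu⟩, rfl⟩
    refine ⟨?_, a, ha, b ∪ σ, hbu, Finset.union_assoc a b σ⟩
    refine Finset.disjoint_union_left.2 ⟨?_, hbd⟩
    exact Finset.disjoint_left.2 fun x hx hx' =>
      Finset.disjoint_left.1 hd (hV₁ a ha hx) (hσV hx')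

lemma sheddingFace_joinC {V₁ V₂ : Finset ι} {Δ₁ Δ₂ : Set (Finset ι)} {σ : Finset ι}
    (hV₁ : ∀ τ ∈ Δ₁, τ ⊆ V₁) (hV₂ : ∀ τ ∈ Δ₂, τ ⊆ V₂) (hσV : σ ⊆ V₂)
    (hd : Disjoint V₁ V₂) (hs : SheddingFace Δ₂ σ) :
    SheddingFace (joinC Δ₁ Δ₂) σ := by
  rintro τ ⟨a, ha, b, hb, rfl⟩ hστ v hv
  have hσb : σ ⊆ b := subset_right_of_union hστ hσV (hV₁ a ha) hd
  obtain ⟨w, hw, hmem⟩ := hs b hb hσb v hv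
  have hwv : w ≠ v := fun h => hw (h ▸ hσb hv)
  have hwV₂ : w ∈ V₂ :=
    hV₂ _ hmem (Finset.mem_erase.2 ⟨hwv, Finset.mem_insert_self w b⟩)
  have hva : v ∉ a := fun h => Finset.disjoint_left.1 hd (hV₁ a ha h) (hσV hv)
  refine ⟨w, ?_, a, ha, (insert w b).erase v, hmem, ?_⟩
  · intro h
    rcases Finset.mem_union.1 h with h | h
    · exact Finset.disjoint_left.1 hd (hV₁ a ha h) hwV₂
    · exact hw h
  · rw [← Finset.union_insert, Finset.erase_union_distrib,
      Finset.erase_eq_of_notMem hva]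

lemma kdec_joinC_shed {V₁ V₂ : Finset ι} {Δ₁ Δ₂ : Set (Finset ι)} {σ : Finset ι} {k : ℤ}
    (hV₁ : ∀ τ ∈ Δ₁, τ ⊆ V₁) (hV₂ : ∀ τ ∈ Δ₂, τ ⊆ V₂) (hd : Disjoint V₁ V₂)
    (hE : (∅ : Finset ι) ∈ Δ₁) (hσ : σ ∈ Δ₂) (hne : σ.Nonempty)
    (hdim : (σ.card : ℤ) ≤ k + 1) (hshed : SheddingFace Δ₂ σ)
    (hdel : KDecomposable k (joinC Δ₁ (delFace Δ₂ σ)))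
    (hlink : KDecomposable k (joinC Δ₁ (link Δ₂ σ))) :
    KDecomposable k (joinC Δ₁ Δ₂) := by
  have hσV : σ ⊆ V₂ := hV₂ σ hσ
  refine KDecomposable.of_shed k _ σ ⟨∅, hE, σ, hσ, (Finset.empty_union σ).symm⟩ hne hdim
    (sheddingFace_joinC hV₁ hV₂ hσV hd hshed) ?_ ?_
  · rw [delFace_joinC hV₁ hσV hd]; exact hdel
  · rw [link_joinC hV₁ hV₂ hσV hd]; exact hlink

lemma kdec_joinC_simplex {V₁ V₂ : Finset ι} (hd : Disjoint V₁ V₂) {k : ℤ}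
    {s : Finset ι} (hs : s ⊆ V₁) {Δ₂ : Set (Finset ι)} (h2 : KDecomposable k Δ₂) :
    IsComplex Δ₂ → (∀ τ ∈ Δ₂, τ ⊆ V₂) → KDecomposable k (joinC {τ : Finset ι | τ ⊆ s} Δ₂) := by
  induction h2 with
  | of_empty => intro _ _; rw [joinC_empty_right]; exact .of_empty _
  | of_simplex t =>
    intro _ _
    rw [joinC_simplex]
    exact .of_simplex _ (s ∪ t)
  | of_shed Δ σ hσ hne hdim hshed hh₁ hh₂ ih₁ ih₂ =>
    intro hc hV
    have hV₁ : ∀ τ ∈ {τ : Finset ι | τ ⊆ s}, τ ⊆ V₁ := fun τ hτ => hτ.trans hs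
    refine kdec_joinC_shed hV₁ hV hd (Finset.empty_subset s) hσ hne hdim hshed
      (ih₁ (isComplex_delFace hc σ) fun τ hτ => hV τ hτ.1)
      (ih₂ (isComplex_link hc σ) fun τ hτ => Finset.subset_union_left.trans (hV _ hτ.2))

lemma kdec_joinC {V₁ V₂ : Finset ι} (hd : Disjoint V₁ V₂) {k : ℤ}
    {Δ₂ : Set (Finset ι)} (h2 : KDecomposable k Δ₂) (hc2 : IsComplex Δ₂)
    (hV₂ : ∀ τ ∈ Δ₂, τ ⊆ V₂) (hE2 : (∅ : Finset ι) ∈ Δ₂)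
    {Δ₁ : Set (Finset ι)} (h1 : KDecomposable k Δ₁) :
    IsComplex Δ₁ → (∀ τ ∈ Δ₁, τ ⊆ V₁) → KDecomposable k (joinC Δ₁ Δ₂) := by
  induction h1 with
  | of_empty => intro _ _; rw [joinC_empty_left]; exact .of_empty _
  | of_simplex t =>
    intro _ hV
    exact kdec_joinC_simplex hd (hV t (by exact subset_refl t)) h2 hc2 hV₂
  | of_shed Δ σ hσ hne hdim hshed hh₁ hh₂ ih₁ ih₂ =>
    intro hc hV
    rw [joinC_comm]
    refine kdec_joinC_shed hV₂ hV hd.symm hE2 hσ hne hdim hshed ?_ ?_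
    · rw [joinC_comm]
      exact ih₁ (isComplex_delFace hc σ) fun τ hτ => hV τ hτ.1
    · rw [joinC_comm]
      exact ih₂ (isComplex_link hc σ) fun τ hτ => Finset.subset_union_left.trans (hV _ hτ.2)

lemma link_link (Δ : Set (Finset ι)) (ρ σ : Finset ι) :
    link (link Δ ρ) (σ \ ρ) = link Δ (σ ∪ ρ) := by
  ext τ
  constructor
  · rintro ⟨h1, h2, hu⟩
    have hτρ : Disjoint τ ρ := (Finset.disjoint_union_left.1 h2).1
    refine ⟨?_, ?_⟩
    · have : Disjoint τ ((σ \ ρ) ∪ ρ) := Finset.disjoint_union_right.2 ⟨h1, hτρ⟩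
      rwa [Finset.sdiff_union_self_eq_union] at this
    · rwa [Finset.union_assoc, Finset.sdiff_union_self_eq_union] at hu
  · rintro ⟨h1, hu⟩
    have h1' : Disjoint τ ((σ \ ρ) ∪ ρ) := by
      rwa [Finset.sdiff_union_self_eq_union]
    obtain ⟨ha, hb⟩ := Finset.disjoint_union_right.1 h1'
    refine ⟨ha, Finset.disjoint_union_left.2 ⟨hb, Finset.sdiff_disjoint⟩, ?_⟩
    rwa [Finset.union_assoc, Finset.sdiff_union_self_eq_union]

lemma kdec_link {k : ℤ} {Δ : Set (Finset ι)} (h : KDecomposable k Δ) :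
    IsComplex Δ → ∀ ρ ∈ Δ, KDecomposable k (link Δ ρ) := by
  induction h with
  | of_empty => intro _ ρ hρ; exact absurd hρ (Set.notMem_empty ρ)
  | of_simplex s =>
    intro _ ρ hρ
    have e : link {τ : Finset ι | τ ⊆ s} ρ = {τ : Finset ι | τ ⊆ s \ ρ} := by
      ext τ
      constructor
      · rintro ⟨hdisj, hsub⟩
        intro x hx
        exact Finset.mem_sdiff.2 ⟨hsub (Finset.mem_union_left _ hx),
          fun h' => Finset.disjoint_left.1 hdisj hx h'⟩
      · intro h'
        refine ⟨Finset.disjoint_left.2 fun x hx hx' => (Finset.mem_sdiff.1 (h' hx)).2 hx', ?_⟩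
        exact Finset.union_subset (h'.trans Finset.sdiff_subset) hρ
    rw [e]; exact .of_simplex _ (s \ ρ)
  | of_shed Δ σ hσ hne hdim hshed hh₁ hh₂ ih₁ ih₂ =>
    intro hc ρ hρ
    have hcd := isComplex_delFace hc σ
    have hcl := isComplex_link hc σ
    by_cases hup : σ ∪ ρ ∈ Δ
    · by_cases hsr : σ ⊆ ρ
      · -- link Δ ρ = link (link Δ σ) (ρ \ σ)
        have e : link Δ ρ = link (link Δ σ) (ρ \ σ) := by
          rw [link_link Δ σ ρ, Finset.union_eq_left.2 hsr]
        rw [e]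
        refine ih₂ hcl (ρ \ σ) ⟨Finset.sdiff_disjoint, ?_⟩
        rw [Finset.sdiff_union_self_eq_union, Finset.union_eq_left.2 hsr]
        exact hρ
      · -- shedding case with σ' = σ \ ρ
        have hσρ : (σ \ ρ) ∪ ρ = σ ∪ ρ := Finset.sdiff_union_self_eq_union
        have hρdel : ρ ∈ delFace Δ σ := ⟨hρ, hsr⟩
        have hρσlink : ρ \ σ ∈ link Δ σ := by
          refine ⟨Finset.sdiff_disjoint, ?_⟩
          rw [Finset.sdiff_union_self_eq_union, Finset.union_comm]
          exact hup
        refine KDecomposable.of_shed k _ (σ \ ρ) ⟨Finset.sdiff_disjoint, hσρ ▸ hup⟩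
          (Finset.sdiff_nonempty.2 hsr)
          (le_trans (by exact_mod_cast Finset.card_le_card Finset.sdiff_subset) hdim)
          ?_ ?_ ?_
        · -- shedding face of link Δ ρ
          rintro τ ⟨hdτ, huτ⟩ hσ'τ v hv
          have hvσ : v ∈ σ := (Finset.mem_sdiff.1 hv).1
          have hvρ : v ∉ ρ := (Finset.mem_sdiff.1 hv).2
          have hστρ : σ ⊆ τ ∪ ρ := by
            intro x hx
            by_cases hxρ : x ∈ ρ
            · exact Finset.mem_union_right τ hxρ
            · exact Finset.mem_union_left ρ (hσ'τ (Finset.mem_sdiff.2 ⟨hx, hxρ⟩))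
          obtain ⟨w, hw, hmem⟩ := hshed (τ ∪ ρ) huτ hστρ v hvσ
          have hwτ : w ∉ τ := fun h => hw (Finset.mem_union_left ρ h)
          have hwρ : w ∉ ρ := fun h => hw (Finset.mem_union_right τ h)
          refine ⟨w, hwτ, ?_, ?_⟩
          · refine Finset.disjoint_left.2 fun x hx hx' => ?_
            rcases Finset.mem_insert.1 (Finset.mem_of_mem_erase hx) with h | h
            · exact hwρ (h ▸ hx')
            · exact Finset.disjoint_left.1 hdτ h hx'
          · rwa [← Finset.insert_union, Finset.erase_union_distrib,
              Finset.erase_eq_of_notMem hvρ] at hmem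
        · -- deletion: delFace (link Δ ρ) (σ \ ρ) = link (delFace Δ σ) ρ
          have e : delFace (link Δ ρ) (σ \ ρ) = link (delFace Δ σ) ρ := by
            ext τ
            constructor
            · rintro ⟨⟨hdisj, hu⟩, hn⟩
              refine ⟨hdisj, hu, fun hs' => hn ?_⟩
              intro x hx
              have hxσ : x ∈ σ := (Finset.mem_sdiff.1 hx).1
              have hxρ : x ∉ ρ := (Finset.mem_sdiff.1 hx).2
              rcases Finset.mem_union.1 (hs' hxσ) with h | h
              · exact h
              · exact absurd h hxρ
            · rintro ⟨hdisj, hu, hn⟩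
              refine ⟨⟨hdisj, hu⟩, fun hs' => hn ?_⟩
              intro x hx
              by_cases hxρ : x ∈ ρ
              · exact Finset.mem_union_right τ hxρ
              · exact Finset.mem_union_left ρ (hs' (Finset.mem_sdiff.2 ⟨hx, hxρ⟩))
          rw [e]
          exact ih₁ hcd ρ hρdel
        · -- link: link (link Δ ρ) (σ \ ρ) = link (link Δ σ) (ρ \ σ)
          have e : link (link Δ ρ) (σ \ ρ) = link (link Δ σ) (ρ \ σ) := by
            rw [link_link Δ ρ σ, link_link Δ σ ρ, Finset.union_comm σ ρ]
          rw [e]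
          exact ih₂ hcl (ρ \ σ) hρσlink
    · -- σ ∪ ρ ∉ Δ : link Δ ρ = link (delFace Δ σ) ρ
      have hsr : ¬ σ ⊆ ρ := fun h => hup (by rwa [Finset.union_eq_right.2 h])
      have e : link Δ ρ = link (delFace Δ σ) ρ := by
        ext τ
        constructor
        · rintro ⟨hdisj, hu⟩
          refine ⟨hdisj, hu, fun hs' => hup ?_⟩
          exact hc _ hu _ (Finset.union_subset hs' Finset.subset_union_right)
        · rintro ⟨hdisj, hu, _⟩
          exact ⟨hdisj, hu⟩
      rw [e]
      exact ih₁ (isComplex_delFace hc σ) ρ ⟨hρ, hsr⟩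

lemma exists_max_face {Δ : Set (Finset ι)} {V : Finset ι}
    (hV : ∀ σ ∈ Δ, σ ⊆ V) (hne : Δ.Nonempty) :
    ∃ τ ∈ Δ, ∀ ρ ∈ Δ, τ ⊆ ρ → τ = ρ := by
  have hfin : Δ.Finite := Set.Finite.subset (V.powerset : Finset (Finset ι)).finite_toSet
    (fun σ hσ => Finset.mem_coe.2 (Finset.mem_powerset.2 (hV σ hσ)))
  obtain ⟨τ, hτ, hmax⟩ := Set.Finite.exists_maximalFor Finset.card Δ hfin hne
  exact ⟨τ, hτ, fun ρ hρ hsub => Finset.eq_of_subset_of_card_le hsub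
    (hmax hρ (Finset.card_le_card hsub))⟩

lemma link_joinC_max {V₁ V₂ : Finset ι} {Δ₁ Δ₂ : Set (Finset ι)}
    (hc₁ : IsComplex Δ₁) (hV₁ : ∀ τ ∈ Δ₁, τ ⊆ V₁) (hV₂ : ∀ τ ∈ Δ₂, τ ⊆ V₂)
    (hd : Disjoint V₁ V₂) {τ₂ : Finset ι} (hτ₂ : τ₂ ∈ Δ₂)
    (hmax : ∀ ρ ∈ Δ₂, τ₂ ⊆ ρ → τ₂ = ρ) :
    link (joinC Δ₁ Δ₂) τ₂ = Δ₁ := by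
  ext τ
  constructor
  · rintro ⟨hdisj, a, ha, b, hb, heq⟩
    have hτ₂b : τ₂ ⊆ b := by
      intro x hx
      have hx' : x ∈ a ∪ b := heq ▸ Finset.mem_union_right τ hx
      rcases Finset.mem_union.1 hx' with h | h
      · exact absurd (hV₂ τ₂ hτ₂ hx) (Finset.disjoint_left.1 hd (hV₁ a ha h))
      · exact h
    have hbτ₂ : τ₂ = b := hmax b hb hτ₂b
    have hτa : τ ⊆ a := by
      intro x hx
      have hx' : x ∈ a ∪ b := heq ▸ Finset.mem_union_left τ₂ hx
      rcases Finset.mem_union.1 hx' with h | h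
      · exact h
      · exact absurd (hbτ₂ ▸ h) (Finset.disjoint_left.1 hdisj hx)
    exact hc₁ a ha τ hτa
  · intro hτ
    refine ⟨Finset.disjoint_left.2 fun x hx hx' =>
      Finset.disjoint_left.1 hd (hV₁ τ hτ hx) (hV₂ τ₂ hτ₂ hx'), τ, hτ, τ₂, hτ₂, rfl⟩

end JoinAux

/-- a join is `k`-decomposable iff both factors are. -/
theorem stmt8 (V₁ V₂ : Finset ι) (Δ₁ Δ₂ : Set (Finset ι))
    (h₁ : IsComplex Δ₁) (h₂ : IsComplex Δ₂)
    (hV₁ : ∀ σ ∈ Δ₁, σ ⊆ V₁) (hV₂ : ∀ σ ∈ Δ₂, σ ⊆ V₂)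
    (hdisj : Disjoint V₁ V₂) (hne₁ : Δ₁.Nonempty) (hne₂ : Δ₂.Nonempty) (k : ℤ) :
    KDecomposable k (joinC Δ₁ Δ₂) ↔ KDecomposable k Δ₁ ∧ KDecomposable k Δ₂ := by
  have hE1 : (∅ : Finset ι) ∈ Δ₁ := empty_mem_of_complex h₁ hne₁
  have hE2 : (∅ : Finset ι) ∈ Δ₂ := empty_mem_of_complex h₂ hne₂
  constructor
  · intro hj
    have hcj : IsComplex (joinC Δ₁ Δ₂) := isComplex_joinC h₁ h₂
    obtain ⟨τ₂, hτ₂, hmax₂⟩ := exists_max_face hV₂ hne₂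
    obtain ⟨τ₁, hτ₁, hmax₁⟩ := exists_max_face hV₁ hne₁
    constructor
    · have hl := kdec_link hj hcj τ₂ ⟨∅, hE1, τ₂, hτ₂, (Finset.empty_union τ₂).symm⟩
      rwa [link_joinC_max h₁ hV₁ hV₂ hdisj hτ₂ hmax₂] at hl
    · have hl := kdec_link hj hcj τ₁ ⟨τ₁, hτ₁, ∅, hE2, (Finset.union_empty τ₁).symm⟩
      rwa [joinC_comm Δ₁ Δ₂, link_joinC_max h₂ hV₂ hV₁ hdisj.symm hτ₁ hmax₁] at hl
  · rintro ⟨hd1, hd2⟩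
    exact kdec_joinC hdisj hd2 h₂ hV₂ hE2 hd1 h₁ hV₁
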